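/- The tensor spectral norm of a third-order tensor X ∈ ℝ^{m×n×k} equals the matrix spectral norm of its block circulant representation X^c ∈ ℝ^{mk×nk}, and also equals the spectral norm of the block diagonal matrix blkdiag(X̃) formed from the frontal slices of the DFT of X along the third mode. -/

import Mathlib

open scoped BigOperators Matrix

/-- Circular convolution of two length-`k` tubes. -/
def tubeConv {k : ℕ} [NeZero k] (a b : ZMod k → ℝ) : ZMod k → ℝ :=
  fun i => ∑ s : ZMod k, a s * b (i - s)

/-- The t-product of third-order tensors. -/
def tProd {k m r n : ℕ} [NeZero k] (X : Fin m → Fin r → ZMod k → ℝ)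
    (Y : Fin r → Fin n → ZMod k → ℝ) : Fin m → Fin n → ZMod k → ℝ :=
  fun i j t => ∑ s : Fin r, tubeConv (X i s) (Y s j) t

/-- Frobenius norm of a third-order tensor. -/
noncomputable def frob3 {k m n : ℕ} [NeZero k] (T : Fin m → Fin n → ZMod k → ℝ) : ℝ :=
  Real.sqrt (∑ i : Fin m, ∑ j : Fin n, ∑ t : ZMod k, (T i j t) ^ 2)

/-- Tensor spectral norm: `‖X‖ = sup {‖X * L‖_F : ‖L‖_F ≤ 1}`. -/
noncomputable def tSpec {k m n : ℕ} [NeZero k] (X : Fin m → Fin n → ZMod k → ℝ) : ℝ :=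
  sSup {c : ℝ | ∃ L : Fin n → Fin n → ZMod k → ℝ, frob3 L ≤ 1 ∧ c = frob3 (tProd X L)}

/-- Matrix spectral (operator) norm, over `ℝ` or `ℂ`. -/
noncomputable def matSpec {𝕜 : Type*} [RCLike 𝕜] {α β : Type*}
    [Fintype α] [Fintype β] [DecidableEq β] (M : Matrix α β 𝕜) : ℝ :=
  ‖LinearMap.toContinuousLinearMap (Matrix.toEuclideanLin M)‖

/-- Block circulant matrix representation of a third-order tensor. -/
def bcirc {k m n : ℕ} [NeZero k] (X : Fin m → Fin n → ZMod k → ℝ) :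
    Matrix (Fin m × ZMod k) (Fin n × ZMod k) ℝ :=
  Matrix.of fun p q => X p.1 q.1 (p.2 - q.2)

/-- Unnormalized DFT of a real tube, with `ω = exp(-2πi/k)`. -/
noncomputable def dftTube {k : ℕ} [NeZero k] (a : ZMod k → ℝ) : ZMod k → ℂ :=
  fun ℓ => ∑ t : ZMod k, (a t : ℂ) * Complex.exp (-2 * Real.pi * Complex.I / k) ^ (t.val * ℓ.val)

/-- Block diagonal matrix formed from the frontal slices of the DFT of `X`
along the third mode. -/
noncomputable def blkdiag {k m n : ℕ} [NeZero k] (X : Fin m → Fin n → ZMod k → ℝ) :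
    Matrix (Fin m × ZMod k) (Fin n × ZMod k) ℂ :=
  Matrix.of fun p q => if p.2 = q.2 then dftTube (X p.1 q.1) p.2 else 0

set_option linter.unusedSectionVars false

namespace TNorm

noncomputable def ww (k : ℕ) : ℂ := Complex.exp (-2 * Real.pi * Complex.I / k)

variable {k : ℕ} [NeZero k]

lemma ww_eq : ww k = (Complex.exp (2 * Real.pi * Complex.I / k))⁻¹ := by
  rw [ww, show (-2 * Real.pi * Complex.I / k : ℂ) = -(2 * Real.pi * Complex.I / k) by ring,
    Complex.exp_neg]

lemma ww_prim : IsPrimitiveRoot (ww k) k := by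
  rw [ww_eq]; exact (Complex.isPrimitiveRoot_exp k (NeZero.ne k)).inv

lemma ww_pow_k : ww k ^ k = 1 := ww_prim.pow_eq_one

lemma ww_pow_mod (a : ℕ) : ww k ^ a = ww k ^ (a % k) := by
  conv_lhs => rw [← Nat.div_add_mod a k]
  rw [pow_add, pow_mul, ww_pow_k, one_pow, one_mul]

noncomputable def eps (k : ℕ) [NeZero k] (a : ZMod k) : ℂ := ww k ^ a.val

lemma eps_zero : eps k 0 = 1 := by simp [eps, ZMod.val_zero]

lemma eps_add (a b : ZMod k) : eps k (a + b) = eps k a * eps k b := by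
  rw [eps, eps, eps, ZMod.val_add, ← ww_pow_mod, pow_add]

lemma eps_valmul (a b : ZMod k) : ww k ^ (a.val * b.val) = eps k (a * b) := by
  rw [eps, ZMod.val_mul, ← ww_pow_mod]

lemma eps_mul_neg (a : ZMod k) : eps k a * eps k (-a) = 1 := by
  rw [← eps_add, add_neg_cancel, eps_zero]

lemma eps_neg (a : ZMod k) : eps k (-a) = (eps k a)⁻¹ :=
  eq_inv_of_mul_eq_one_left (by rw [mul_comm]; exact eps_mul_neg a)

lemma conj_ww : (starRingEnd ℂ) (ww k) = (ww k)⁻¹ := by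
  rw [ww, ← Complex.exp_conj, ← Complex.exp_neg]
  congr 1
  simp only [map_div₀, map_mul, map_neg, map_ofNat, Complex.conj_I, Complex.conj_ofReal,
    Complex.conj_natCast]
  ring

lemma conj_eps (a : ZMod k) : (starRingEnd ℂ) (eps k a) = eps k (-a) := by
  rw [eps, map_pow, conj_ww, inv_pow, ← eps, eps_neg]

lemma sum_val_eq_range {M : Type*} [AddCommMonoid M] (f : ℕ → M) :
    ∑ u : ZMod k, f u.val = ∑ i ∈ Finset.range k, f i := by
  refine Finset.sum_nbij' (fun u => u.val) (fun i => (i : ZMod k)) ?_ ?_ ?_ ?_ ?_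
  · intro u _; exact Finset.mem_range.mpr (ZMod.val_lt u)
  · intro i _; exact Finset.mem_univ _
  · intro u _; exact ZMod.natCast_rightInverse u
  · intro i hi; exact ZMod.val_cast_of_lt (Finset.mem_range.mp hi)
  · intro u _; rfl

lemma eps_pow_val (c u : ZMod k) : eps k (c * u) = (eps k c) ^ u.val := by
  rw [← eps_valmul]; rw [eps]; rw [← pow_mul]

lemma charSum (c : ZMod k) :
    ∑ u : ZMod k, eps k (c * u) = if c = 0 then (k : ℂ) else 0 := by
  simp_rw [eps_pow_val]
  rw [sum_val_eq_range (fun i => eps k c ^ i)]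
  by_cases hc : c = 0
  · simp [hc, eps_zero]
  · rw [if_neg hc]
    have hne : eps k c ≠ 1 := by
      rw [eps]
      intro h
      have hd := (ww_prim.pow_eq_one_iff_dvd c.val).mp h
      have h0 : c.val = 0 := Nat.eq_zero_of_dvd_of_lt hd (ZMod.val_lt c)
      exact hc ((ZMod.val_eq_zero c).mp h0)
    rw [geom_sum_eq hne]
    have : eps k c ^ k = 1 := by
      rw [eps, ← pow_mul, mul_comm, pow_mul, ww_pow_k, one_pow]
    rw [this, sub_self, zero_div]

lemma charSum' (ℓ ℓ' : ZMod k) :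
    ∑ t : ZMod k, eps k (ℓ * t) * (starRingEnd ℂ) (eps k (ℓ' * t)) =
      if ℓ = ℓ' then (k : ℂ) else 0 := by
  have h : ∀ t, eps k (ℓ * t) * (starRingEnd ℂ) (eps k (ℓ' * t)) = eps k ((ℓ - ℓ') * t) := by
    intro t
    rw [conj_eps, ← eps_add]
    congr 1
    ring
  simp_rw [h, charSum, sub_eq_zero]

/-- The (unnormalized) block DFT matrix. -/
noncomputable def Fm (k m : ℕ) [NeZero k] : Matrix (Fin m × ZMod k) (Fin m × ZMod k) ℂ :=
  Matrix.of fun p q => if p.1 = q.1 then eps k (p.2 * q.2) else 0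

variable {m n : ℕ}

lemma Fm_mul_conjT : Fm k m * (Fm k m)ᴴ = (k : ℂ) • (1 : Matrix (Fin m × ZMod k) _ ℂ) := by
  ext ⟨i, ℓ⟩ ⟨j, ℓ'⟩
  simp only [Matrix.mul_apply, Matrix.conjTranspose_apply, Fm, Matrix.of_apply,
    Matrix.smul_apply, Matrix.one_apply, smul_eq_mul, Fintype.sum_prod_type]
  have hmain : ∀ b : Fin m, ∑ x : ZMod k,
      (if i = b then eps k (ℓ * x) else 0) * star (if j = b then eps k (ℓ' * x) else 0)
        = if i = b ∧ j = b then (if ℓ = ℓ' then (k : ℂ) else 0) else 0 := by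
    intro b
    by_cases h1 : i = b <;> by_cases h2 : j = b <;> simp [h1, h2, Complex.star_def, charSum']
  rw [Finset.sum_congr rfl (fun b _ => hmain b)]
  by_cases hij : i = j
  · subst hij
    simp [Finset.sum_ite_eq, Prod.ext_iff, mul_ite]
  · rw [Finset.sum_eq_zero, if_neg (by simp [Prod.ext_iff, hij]), mul_zero]
    intro b _
    rw [if_neg]
    rintro ⟨rfl, h⟩
    exact hij h.symm


lemma conjT_mul_Fm : (Fm k m)ᴴ * Fm k m = (k : ℂ) • (1 : Matrix (Fin m × ZMod k) _ ℂ) := by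
  ext ⟨i, ℓ⟩ ⟨j, ℓ'⟩
  simp only [Matrix.mul_apply, Matrix.conjTranspose_apply, Fm, Matrix.of_apply,
    Matrix.smul_apply, Matrix.one_apply, smul_eq_mul, Fintype.sum_prod_type]
  have hcs : ∀ ℓ ℓ' : ZMod k, ∑ t : ZMod k, star (eps k (t * ℓ)) * eps k (t * ℓ')
      = if ℓ = ℓ' then (k : ℂ) else 0 := by
    intro ℓ ℓ'
    have h : ∀ t : ZMod k, star (eps k (t * ℓ)) * eps k (t * ℓ')
        = eps k ((ℓ' - ℓ) * t) := by
      intro t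
      rw [Complex.star_def, conj_eps, ← eps_add]
      congr 1
      ring
    simp_rw [h, charSum]
    simp only [sub_eq_zero]
    simp [eq_comm]
  have hmain : ∀ b : Fin m, ∑ x : ZMod k,
      star (if b = i then eps k (x * ℓ) else 0) * (if b = j then eps k (x * ℓ') else 0)
        = if b = i ∧ b = j then (if ℓ = ℓ' then (k : ℂ) else 0) else 0 := by
    intro b
    rcases eq_or_ne b i with rfl | h1
    · rcases eq_or_ne b j with rfl | h2
      · simpa [Complex.star_def] using hcs ℓ ℓ'
      · simp [h2]
    · simp [h1]
  rw [Finset.sum_congr rfl (fun b _ => hmain b)]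
  by_cases hij : i = j
  · subst hij
    simp [Finset.sum_ite_eq', Prod.ext_iff, mul_ite]
  · rw [Finset.sum_eq_zero, if_neg (by simp [Prod.ext_iff, hij]), mul_zero]
    intro b _
    rw [if_neg]
    rintro ⟨rfl, h⟩
    exact hij h

lemma key_entry (x : ZMod k → ℝ) (ℓ ℓ' : ZMod k) :
    ∑ u : ZMod k, (∑ t : ZMod k, eps k (ℓ * t) * (x (t - u) : ℂ)) * star (eps k (ℓ' * u))
      = (if ℓ = ℓ' then (k : ℂ) else 0) * dftTube x ℓ := by
  have hw : (Complex.exp (-2 * (Real.pi : ℂ) * Complex.I / k)) = ww k := rfl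
  calc ∑ u : ZMod k, (∑ t : ZMod k, eps k (ℓ * t) * (x (t - u) : ℂ)) * star (eps k (ℓ' * u))
      = ∑ u : ZMod k, (∑ s : ZMod k, eps k (ℓ * (u + s)) * (x s : ℂ)) * star (eps k (ℓ' * u)) := by
        refine Finset.sum_congr rfl fun u _ => ?_
        congr 1
        refine (Fintype.sum_equiv (Equiv.addLeft u) _ _ fun s => ?_).symm
        simp [add_sub_cancel_left]
    _ = ∑ u : ZMod k, ∑ s : ZMod k, eps k ((ℓ - ℓ') * u) * (eps k (ℓ * s) * (x s : ℂ)) := by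
        refine Finset.sum_congr rfl fun u _ => ?_
        rw [Finset.sum_mul]
        refine Finset.sum_congr rfl fun s _ => ?_
        rw [Complex.star_def, conj_eps, mul_assoc, mul_comm ((x s : ℂ)), ← mul_assoc,
          ← eps_add, show ℓ * (u + s) + -(ℓ' * u) = (ℓ - ℓ') * u + ℓ * s by ring, eps_add,
          mul_assoc]
    _ = (∑ u : ZMod k, eps k ((ℓ - ℓ') * u)) * (∑ s : ZMod k, eps k (ℓ * s) * (x s : ℂ)) := by
        rw [Finset.sum_mul]
        exact Finset.sum_congr rfl fun u _ => by rw [Finset.mul_sum]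
    _ = (if ℓ = ℓ' then (k : ℂ) else 0) * dftTube x ℓ := by
        rw [charSum]
        simp only [sub_eq_zero]
        congr 1
        simp only [dftTube, hw, eps_valmul]
        exact Finset.sum_congr rfl fun t _ => by rw [mul_comm ℓ t, mul_comm]

lemma Fm_bcirc (X : Fin m → Fin n → ZMod k → ℝ) :
    Fm k m * (bcirc X).map (fun r => (r : ℂ)) * (Fm k n)ᴴ = (k : ℂ) • blkdiag X := by
  ext ⟨i, ℓ⟩ ⟨j, ℓ'⟩
  simp only [Matrix.mul_apply, Matrix.conjTranspose_apply, Matrix.map_apply, Fm, bcirc,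
    blkdiag, Matrix.of_apply, Fintype.sum_prod_type, Matrix.smul_apply, smul_eq_mul,
    ite_mul, zero_mul, apply_ite (star : ℂ → ℂ), star_zero, mul_ite, mul_zero,
    Finset.sum_ite_irrel, Finset.sum_const_zero, Finset.sum_ite_eq, Finset.mem_univ, if_true]
  rw [key_entry (X i j) ℓ ℓ']
  split <;> ring


open scoped Matrix.Norms.L2Operator

variable {α β : Type*} [Fintype α] [Fintype β] [DecidableEq α] [DecidableEq β]

lemma matSpec_eq_l2 {𝕜 : Type*} [RCLike 𝕜] (M : Matrix α β 𝕜) : matSpec M = ‖M‖ := rfl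

lemma norm_one_le' {𝕜 : Type*} [RCLike 𝕜] : ‖(1 : Matrix α α 𝕜)‖ ≤ 1 := by
  rw [Matrix.cstar_norm_def, map_one]
  exact ContinuousLinearMap.norm_id_le

lemma norm_le_one_of_unitary {𝕜 : Type*} [RCLike 𝕜] (U : Matrix α α 𝕜) (h : Uᴴ * U = 1) :
    ‖U‖ ≤ 1 := by
  have h2 : ‖U‖ * ‖U‖ ≤ 1 := by
    rw [← Matrix.l2_opNorm_conjTranspose_mul_self, h]
    exact norm_one_le'
  nlinarith [norm_nonneg U]

lemma norm_unitary_conj {𝕜 : Type*} [RCLike 𝕜] (U : Matrix α α 𝕜) (V : Matrix β β 𝕜)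
    (A : Matrix α β 𝕜) (hU1 : Uᴴ * U = 1) (hV1 : Vᴴ * V = 1) (hV2 : V * Vᴴ = 1) :
    ‖U * A * Vᴴ‖ = ‖A‖ := by
  have hUn := norm_le_one_of_unitary U hU1
  have hVn := norm_le_one_of_unitary V hV1
  have hUHn : ‖Uᴴ‖ ≤ 1 := by rw [Matrix.l2_opNorm_conjTranspose]; exact hUn
  have hVHn : ‖Vᴴ‖ ≤ 1 := by rw [Matrix.l2_opNorm_conjTranspose]; exact hVn
  have le1 : ‖U * A * Vᴴ‖ ≤ ‖A‖ :=
    calc ‖U * A * Vᴴ‖ ≤ ‖U * A‖ * ‖Vᴴ‖ := Matrix.l2_opNorm_mul _ _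
    _ ≤ ‖U * A‖ := mul_le_of_le_one_right (norm_nonneg _) hVHn
    _ ≤ ‖U‖ * ‖A‖ := Matrix.l2_opNorm_mul _ _
    _ ≤ ‖A‖ := mul_le_of_le_one_left (norm_nonneg _) hUn
  have he : Uᴴ * (U * A * Vᴴ) * V = A := by
    have h1 : Uᴴ * (U * A * Vᴴ) * V = Uᴴ * U * A * (Vᴴ * V) := by
      simp only [Matrix.mul_assoc]
    rw [h1, hU1, hV1, Matrix.one_mul, Matrix.mul_one]
  have le2 : ‖A‖ ≤ ‖U * A * Vᴴ‖ := by
    conv_lhs => rw [← he]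
    calc ‖Uᴴ * (U * A * Vᴴ) * V‖ ≤ ‖Uᴴ * (U * A * Vᴴ)‖ * ‖V‖ := Matrix.l2_opNorm_mul _ _
    _ ≤ ‖Uᴴ * (U * A * Vᴴ)‖ := mul_le_of_le_one_right (norm_nonneg _) hVn
    _ ≤ ‖Uᴴ‖ * ‖U * A * Vᴴ‖ := Matrix.l2_opNorm_mul _ _
    _ ≤ ‖U * A * Vᴴ‖ := mul_le_of_le_one_left (norm_nonneg _) hUHn
  linarith


lemma euclid_norm_sq_R (x : EuclideanSpace ℝ β) : ‖x‖ ^ 2 = ∑ i, (x i) ^ 2 := by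
  rw [EuclideanSpace.norm_eq, Real.sq_sqrt (Finset.sum_nonneg fun i _ => sq_nonneg _)]
  simp [Real.norm_eq_abs, sq_abs]

lemma euclid_norm_sq_C (x : EuclideanSpace ℂ β) :
    ‖x‖ ^ 2 = ∑ i, ((x i).re ^ 2 + (x i).im ^ 2) := by
  rw [EuclideanSpace.norm_eq, Real.sq_sqrt (Finset.sum_nonneg fun i _ => sq_nonneg _)]
  refine Finset.sum_congr rfl fun i _ => ?_
  rw [Complex.sq_norm, Complex.normSq_apply]
  ring

lemma sqrt_le_of_sq_le_sq {a b : ℝ} (ha : 0 ≤ a) (hb : 0 ≤ b) (h : a ^ 2 ≤ b ^ 2) :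
    a ≤ b := by nlinarith

lemma norm_map_ofReal (M : Matrix α β ℝ) : ‖M.map (fun r => (r : ℂ))‖ = ‖M‖ := by
  set f := LinearMap.toContinuousLinearMap (Matrix.toEuclideanLin M) with hfdef
  set g := LinearMap.toContinuousLinearMap
    (Matrix.toEuclideanLin (M.map (fun r => (r : ℂ)))) with hgdef
  have hfx : ∀ (x : EuclideanSpace ℝ β) (j : α), (f x) j = ∑ i, M j i * x i := fun x j => rfl
  have hgx : ∀ (x : EuclideanSpace ℂ β) (j : α),
      (g x) j = ∑ i, (M j i : ℂ) * x i := fun x j => rfl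
  have step1 : ∀ x : EuclideanSpace ℂ β, ‖g x‖ ≤ ‖f‖ * ‖x‖ := by
    intro x
    set a : EuclideanSpace ℝ β := (WithLp.equiv 2 (β → ℝ)).symm (fun i => (x i).re) with hadef
    set b : EuclideanSpace ℝ β := (WithLp.equiv 2 (β → ℝ)).symm (fun i => (x i).im) with hbdef
    have hre : ∀ j, ((g x) j).re = (f a) j := by
      intro j
      rw [hgx, hfx, Complex.re_sum]
      exact Finset.sum_congr rfl fun i _ => by
        rw [Complex.re_ofReal_mul]; rfl
    have him : ∀ j, ((g x) j).im = (f b) j := by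
      intro j
      rw [hgx, hfx, Complex.im_sum]
      refine Finset.sum_congr rfl fun i _ => ?_
      rw [show ((M j i : ℂ) * x i).im = M j i * (x i).im by
        simp [Complex.mul_im]]
      rfl
    have hxsq : ‖a‖ ^ 2 + ‖b‖ ^ 2 = ‖x‖ ^ 2 := by
      rw [euclid_norm_sq_R, euclid_norm_sq_R, euclid_norm_sq_C, ← Finset.sum_add_distrib]
      exact Finset.sum_congr rfl fun i _ => rfl
    have hgsq : ‖g x‖ ^ 2 = ‖f a‖ ^ 2 + ‖f b‖ ^ 2 := by
      rw [euclid_norm_sq_C, euclid_norm_sq_R, euclid_norm_sq_R, ← Finset.sum_add_distrib]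
      exact Finset.sum_congr rfl fun j _ => by rw [hre, him]
    have hsq : ‖g x‖ ^ 2 ≤ (‖f‖ * ‖x‖) ^ 2 := by
      have h1 : ‖f a‖ ^ 2 ≤ (‖f‖ * ‖a‖) ^ 2 :=
        pow_le_pow_left₀ (norm_nonneg _) (f.le_opNorm a) 2
      have h2 : ‖f b‖ ^ 2 ≤ (‖f‖ * ‖b‖) ^ 2 :=
        pow_le_pow_left₀ (norm_nonneg _) (f.le_opNorm b) 2
      have e1 : (‖f‖ * ‖x‖) ^ 2 = ‖f‖ ^ 2 * (‖a‖ ^ 2 + ‖b‖ ^ 2) := by rw [hxsq]; ring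
      rw [hgsq, e1]
      calc ‖f a‖ ^ 2 + ‖f b‖ ^ 2 ≤ (‖f‖ * ‖a‖) ^ 2 + (‖f‖ * ‖b‖) ^ 2 := add_le_add h1 h2
      _ = ‖f‖ ^ 2 * (‖a‖ ^ 2 + ‖b‖ ^ 2) := by ring
    exact sqrt_le_of_sq_le_sq (norm_nonneg _) (mul_nonneg (norm_nonneg _) (norm_nonneg _)) hsq
  have step2 : ∀ x : EuclideanSpace ℝ β, ‖f x‖ ≤ ‖g‖ * ‖x‖ := by
    intro x
    set xc : EuclideanSpace ℂ β := (WithLp.equiv 2 (β → ℂ)).symm (fun i => (x i : ℂ)) with hxcdef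
    have h1 : ‖xc‖ = ‖x‖ := by
      have hsq : ‖xc‖ ^ 2 = ‖x‖ ^ 2 := by
        rw [euclid_norm_sq_C, euclid_norm_sq_R]
        refine Finset.sum_congr rfl fun i _ => ?_
        have hxi : xc i = ((x i : ℝ) : ℂ) := rfl
        rw [hxi]
        simp
      calc ‖xc‖ = Real.sqrt (‖xc‖ ^ 2) := (Real.sqrt_sq (norm_nonneg _)).symm
      _ = Real.sqrt (‖x‖ ^ 2) := by rw [hsq]
      _ = ‖x‖ := Real.sqrt_sq (norm_nonneg _)
    have h2 : ‖g xc‖ = ‖f x‖ := by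
      have hc : ∀ j, (g xc) j = ((f x) j : ℂ) := by
        intro j
        rw [hgx, hfx]
        push_cast
        exact Finset.sum_congr rfl fun i _ => rfl
      have : ‖g xc‖ ^ 2 = ‖f x‖ ^ 2 := by
        rw [euclid_norm_sq_C, euclid_norm_sq_R]
        refine Finset.sum_congr rfl fun j _ => ?_
        rw [hc]
        simp
      calc ‖g xc‖ = Real.sqrt (‖g xc‖ ^ 2) := (Real.sqrt_sq (norm_nonneg _)).symm
      _ = Real.sqrt (‖f x‖ ^ 2) := by rw [this]
      _ = ‖f x‖ := Real.sqrt_sq (norm_nonneg _)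
    rw [← h2, ← h1]
    exact g.le_opNorm xc
  have hle1 : ‖g‖ ≤ ‖f‖ := g.opNorm_le_bound (norm_nonneg f) step1
  have hle2 : ‖f‖ ≤ ‖g‖ := f.opNorm_le_bound (norm_nonneg g) step2
  exact le_antisymm hle1 hle2



lemma tprod_col (X : Fin m → Fin n → ZMod k → ℝ) (L : Fin n → Fin n → ZMod k → ℝ)
    (i : Fin m) (j : Fin n) (t : ZMod k) :
    tProd X L i j t = (bcirc X *ᵥ fun p : Fin n × ZMod k => L p.1 j p.2) (i, t) := by
  simp only [tProd, tubeConv, Matrix.mulVec, dotProduct, bcirc, Matrix.of_apply,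
    Fintype.sum_prod_type]
  refine Finset.sum_congr rfl fun s _ => ?_
  refine Fintype.sum_equiv (Equiv.subLeft t) _ _ fun u => ?_
  simp [Equiv.subLeft, sub_sub_cancel]

/-- Frobenius norm of the t-product as an ℓ² sum of images of the columns. -/
lemma frob3_tprod (X : Fin m → Fin n → ZMod k → ℝ) (L : Fin n → Fin n → ZMod k → ℝ) :
    frob3 (tProd X L) = Real.sqrt (∑ j : Fin n,
      ‖LinearMap.toContinuousLinearMap (Matrix.toEuclideanLin (bcirc X))
        ((WithLp.equiv 2 (Fin n × ZMod k → ℝ)).symm fun p => L p.1 j p.2)‖ ^ 2) := by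
  rw [frob3]
  congr 1
  rw [Finset.sum_comm]
  refine Finset.sum_congr rfl fun j _ => ?_
  rw [euclid_norm_sq_R, Fintype.sum_prod_type]
  refine Finset.sum_congr rfl fun i _ => Finset.sum_congr rfl fun t _ => ?_
  rw [tprod_col]
  rfl

lemma frob3_cols (L : Fin n → Fin n → ZMod k → ℝ) :
    frob3 L = Real.sqrt (∑ j : Fin n,
      ‖(WithLp.equiv 2 (Fin n × ZMod k → ℝ)).symm fun p : Fin n × ZMod k => L p.1 j p.2‖ ^ 2) := by
  rw [frob3]
  congr 1
  rw [Finset.sum_comm]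
  refine Finset.sum_congr rfl fun j _ => ?_
  rw [euclid_norm_sq_R, Fintype.sum_prod_type]
  exact Finset.sum_congr rfl fun i _ => Finset.sum_congr rfl fun t _ => rfl

lemma tSpec_eq_norm_bcirc (X : Fin m → Fin n → ZMod k → ℝ) : tSpec X = ‖bcirc X‖ := by
  classical
  set f := LinearMap.toContinuousLinearMap (Matrix.toEuclideanLin (bcirc X)) with hfdef
  have hnorm : ‖bcirc X‖ = ‖f‖ := rfl
  set S := {c : ℝ | ∃ L : Fin n → Fin n → ZMod k → ℝ, frob3 L ≤ 1 ∧ c = frob3 (tProd X L)} with hS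
  have hub : ∀ c ∈ S, c ≤ ‖f‖ := by
    rintro c ⟨L, hL, rfl⟩
    rw [frob3_tprod]
    have h1 : ∑ j : Fin n, ‖f ((WithLp.equiv 2 (Fin n × ZMod k → ℝ)).symm
        fun p => L p.1 j p.2)‖ ^ 2 ≤ ‖f‖ ^ 2 * ∑ j : Fin n,
        ‖(WithLp.equiv 2 (Fin n × ZMod k → ℝ)).symm fun p : Fin n × ZMod k => L p.1 j p.2‖ ^ 2 := by
      rw [Finset.mul_sum]
      refine Finset.sum_le_sum fun j _ => ?_
      have := pow_le_pow_left₀ (norm_nonneg _) (f.le_opNorm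
        ((WithLp.equiv 2 (Fin n × ZMod k → ℝ)).symm fun p => L p.1 j p.2)) 2
      calc ‖f _‖ ^ 2 ≤ (‖f‖ * ‖_‖) ^ 2 := this
      _ = ‖f‖ ^ 2 * ‖_‖ ^ 2 := by ring
    calc Real.sqrt (∑ j : Fin n, ‖f ((WithLp.equiv 2 (Fin n × ZMod k → ℝ)).symm
          fun p => L p.1 j p.2)‖ ^ 2)
        ≤ Real.sqrt (‖f‖ ^ 2 * ∑ j : Fin n,
          ‖(WithLp.equiv 2 (Fin n × ZMod k → ℝ)).symm
            fun p : Fin n × ZMod k => L p.1 j p.2‖ ^ 2) := Real.sqrt_le_sqrt h1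
      _ = ‖f‖ * Real.sqrt (∑ j : Fin n, ‖(WithLp.equiv 2 (Fin n × ZMod k → ℝ)).symm
            fun p : Fin n × ZMod k => L p.1 j p.2‖ ^ 2) := by
          rw [Real.sqrt_mul (sq_nonneg _), Real.sqrt_sq (norm_nonneg _)]
      _ ≤ ‖f‖ * 1 := by
          refine mul_le_mul_of_nonneg_left ?_ (norm_nonneg _)
          rw [← frob3_cols]
          exact hL
      _ = ‖f‖ := mul_one _
  have hzero : (0 : ℝ) ∈ S := by
    refine ⟨fun _ _ _ => 0, ?_, ?_⟩
    · simp [frob3]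
    · simp [frob3, tProd, tubeConv]
  have hbdd : BddAbove S := ⟨‖f‖, hub⟩
  have hsup_nonneg : 0 ≤ sSup S := le_csSup hbdd hzero
  refine le_antisymm (Real.sSup_le hub (norm_nonneg _)) ?_
  rw [hnorm, show tSpec X = sSup S from rfl]
  rcases Nat.eq_zero_or_pos n with hn | hn
  · subst hn
    have hf0 : ‖f‖ ≤ 0 := by
      refine f.opNorm_le_bound le_rfl fun x => ?_
      have : x = 0 := Subsingleton.elim x 0
      simp [this]
    linarith
  · have j₀ : Fin n := ⟨0, hn⟩
    -- membership lemma
    have hmem : ∀ u : EuclideanSpace ℝ (Fin n × ZMod k), ‖u‖ ≤ 1 → ‖f u‖ ∈ S := by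
      intro u hu
      refine ⟨fun s j t => if j = j₀ then u (s, t) else 0, ?_, ?_⟩
      · rw [frob3_cols]
        have hcol : ∀ j : Fin n, ‖(WithLp.equiv 2 (Fin n × ZMod k → ℝ)).symm
            (fun p : Fin n × ZMod k => if j = j₀ then u (p.1, p.2) else 0)‖ ^ 2
              = if j = j₀ then ‖u‖ ^ 2 else 0 := by
          intro j
          by_cases hj : j = j₀
          · subst hj
            simp only [if_pos rfl, if_true]
            congr 1
          · simp only [if_neg hj]
            rw [euclid_norm_sq_R]
            simp
        simp_rw [hcol]
        rw [Finset.sum_ite_eq' Finset.univ j₀ (fun _ => ‖u‖ ^ 2)]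
        simp only [Finset.mem_univ, if_true]
        rw [Real.sqrt_sq (norm_nonneg _)]
        exact hu
      · rw [frob3_tprod, ← hfdef]
        have hcol2 : ∀ j : Fin n, ‖f ((WithLp.equiv 2 (Fin n × ZMod k → ℝ)).symm
            fun p : Fin n × ZMod k => if j = j₀ then u (p.1, p.2) else 0)‖ ^ 2
              = if j = j₀ then ‖f u‖ ^ 2 else 0 := by
          intro j
          by_cases hj : j = j₀
          · subst hj
            simp only [if_pos rfl, if_true]
            congr 2
          · simp only [if_neg hj]
            have hz : ((WithLp.equiv 2 (Fin n × ZMod k → ℝ)).symm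
                fun p : Fin n × ZMod k => (0 : ℝ)) = 0 := rfl
            rw [hz, map_zero]
            simp
        simp_rw [hcol2]
        rw [Finset.sum_ite_eq' Finset.univ j₀ (fun _ => ‖f u‖ ^ 2)]
        simp only [Finset.mem_univ, if_true]
        rw [Real.sqrt_sq (norm_nonneg _)]
    refine f.opNorm_le_bound hsup_nonneg fun x => ?_
    rcases eq_or_ne x 0 with rfl | hx
    · simp
    · have hxn : ‖x‖ ≠ 0 := norm_ne_zero_iff.mpr hx
      set u : EuclideanSpace ℝ (Fin n × ZMod k) := ‖x‖⁻¹ • x with hudef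
      have hun : ‖u‖ = 1 := by
        rw [hudef, norm_smul, norm_inv, norm_norm, inv_mul_cancel₀ hxn]
      have hmem' := hmem u (le_of_eq hun)
      have hle : ‖f u‖ ≤ sSup S := le_csSup hbdd hmem'
      have hfx : f x = ‖x‖ • f u := by
        rw [hudef, map_smul, smul_smul, mul_inv_cancel₀ hxn, one_smul]
      rw [hfx, norm_smul, norm_norm, mul_comm]
      exact mul_le_mul_of_nonneg_right hle (norm_nonneg _)


section Bridge
variable {k m n : ℕ} [NeZero k]
open scoped Matrix.Norms.L2Operator

lemma norm_blkdiag_eq (X : Fin m → Fin n → ZMod k → ℝ) : ‖blkdiag X‖ = ‖bcirc X‖ := by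
  classical
  set s : ℂ := ((Real.sqrt k : ℝ) : ℂ) with hsdef
  have hss : s * s = (k : ℂ) := by
    rw [hsdef, ← Complex.ofReal_mul, Real.mul_self_sqrt (Nat.cast_nonneg k)]
    norm_cast
  have hs0 : s ≠ 0 := by
    rw [hsdef]
    exact Complex.ofReal_ne_zero.mpr
      (ne_of_gt (Real.sqrt_pos.mpr (by exact_mod_cast Nat.pos_of_ne_zero (NeZero.ne k))))
  set c : ℂ := s⁻¹ with hcdef
  have hconjc : star c = c := by
    rw [Complex.star_def, hcdef, map_inv₀, hsdef, Complex.conj_ofReal]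
  have hck : c * c * (k : ℂ) = 1 := by
    rw [← hss, hcdef]
    field_simp
  set U : Matrix (Fin m × ZMod k) (Fin m × ZMod k) ℂ := c • Fm k m with hUdef
  set V : Matrix (Fin n × ZMod k) (Fin n × ZMod k) ℂ := c • Fm k n with hVdef
  have hU1 : Uᴴ * U = 1 := by
    rw [hUdef, Matrix.conjTranspose_smul, hconjc, Matrix.smul_mul, Matrix.mul_smul,
      conjT_mul_Fm, smul_smul, smul_smul, hck, one_smul]
  have hV1 : Vᴴ * V = 1 := by
    rw [hVdef, Matrix.conjTranspose_smul, hconjc, Matrix.smul_mul, Matrix.mul_smul,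
      conjT_mul_Fm, smul_smul, smul_smul, hck, one_smul]
  have hV2 : V * Vᴴ = 1 := by
    rw [hVdef, Matrix.conjTranspose_smul, hconjc, Matrix.smul_mul, Matrix.mul_smul,
      Fm_mul_conjT, smul_smul, smul_smul, hck, one_smul]
  have hkey : U * (bcirc X).map (fun r => (r : ℂ)) * Vᴴ = blkdiag X := by
    rw [hUdef, hVdef, Matrix.conjTranspose_smul, hconjc, Matrix.smul_mul, Matrix.smul_mul,
      Matrix.mul_smul, Fm_bcirc, smul_smul, smul_smul, hck, one_smul]
  calc ‖blkdiag X‖ = ‖U * (bcirc X).map (fun r => (r : ℂ)) * Vᴴ‖ := by rw [hkey]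
  _ = ‖(bcirc X).map (fun r => (r : ℂ))‖ := norm_unitary_conj U V _ hU1 hV1 hV2
  _ = ‖bcirc X‖ := norm_map_ofReal _

end Bridge

end TNorm

/-- The tensor spectral norm equals the spectral norm of the block circulant
representation, and also the spectral norm of the block diagonal matrix of the
frontal slices of the DFT along the third mode. -/
theorem tSpec_eq_bcirc_eq_blkdiag {k m n : ℕ} [NeZero k]
    (X : Fin m → Fin n → ZMod k → ℝ) :
    tSpec X = matSpec (bcirc X) ∧ tSpec X = matSpec (blkdiag X) := by
  constructor
  · rw [TNorm.matSpec_eq_l2]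
    exact TNorm.tSpec_eq_norm_bcirc X
  · rw [TNorm.matSpec_eq_l2, TNorm.norm_blkdiag_eq]
    exact TNorm.tSpec_eq_norm_bcirc X
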